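/- For the equal mitosis equation with B > 0 and any ϱ > 0, the solution with initial condition n⁰ = ϱN + ξ, where ξ(x) = (1/2)N'(x/2), is n(x,t) = ϱN(x) + e^{-Bt} ξ(x), and it satisfies ∫₀^∞ |n(x,t) - ϱN(x)| dx = e^{-Bt} ∫₀^∞ |ξ(x)| dx; hence the decay rate e^{-(k-1)Bt} = e^{-Bt} is attained. -/

import Mathlib

open MeasureTheory Set Filter

/-- Equal mitosis optimality: with `ξ(x) = (1/2)N'(x/2)`, the function
`n(x,t) = ϱN(x) + e^{-Bt}ξ(x)` is the solution of the equal mitosis equation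
with initial condition `n⁰ = ϱN + ξ`, and
`∫₀^∞ |n(x,t) - ϱN(x)| dx = e^{-Bt} ∫₀^∞ |ξ(x)| dx`, so the decay rate
`e^{-(k-1)Bt} = e^{-Bt}` is attained. -/
theorem stmt_12 (B ϱ : ℝ) (hB : 0 < B) (hϱ : 0 < ϱ) (N Nd Ndd : ℝ → ℝ)
    (hN0 : N 0 = 0) (hNpos : ∀ x > (0:ℝ), 0 < N x)
    (hNint : (∫ x in Set.Ioi (0:ℝ), N x) = 1)
    (hNd : ∀ x : ℝ, HasDerivAt N (Nd x) x)
    (hNdd : ∀ x : ℝ, HasDerivAt Nd (Ndd x) x)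
    (hNeq : ∀ x > (0:ℝ), Nd x + 2 * B * N x = 4 * B * N (2 * x))
    (hξint : IntegrableOn (fun x => (1 / 2) * Nd (x / 2)) (Set.Ioi 0)) :
    -- `n(·,0)` is the prescribed initial condition
    (∀ x : ℝ, ϱ * N x + Real.exp (-B * 0) * ((1 / 2) * Nd (x / 2))
      = ϱ * N x + (1 / 2) * Nd (x / 2)) ∧
    -- boundary condition
    (∀ t : ℝ, ϱ * N 0 + Real.exp (-B * t) * ((1 / 2) * Nd (0 / 2))
      = Real.exp (-B * t) * ((1 / 2) * Nd 0)) ∧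
    -- `n(x,t) = ϱN(x) + e^{-Bt}ξ(x)` solves the equal mitosis equation
    (∀ x > (0:ℝ), ∀ t : ℝ,
      HasDerivAt (fun s => ϱ * N x + Real.exp (-B * s) * ((1 / 2) * Nd (x / 2)))
        (-B * (Real.exp (-B * t) * ((1 / 2) * Nd (x / 2)))) t ∧
      HasDerivAt (fun z => ϱ * N z + Real.exp (-B * t) * ((1 / 2) * Nd (z / 2)))
        (ϱ * Nd x + Real.exp (-B * t) * ((1 / 4) * Ndd (x / 2))) x ∧
      (-B * (Real.exp (-B * t) * ((1 / 2) * Nd (x / 2))))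
          + (ϱ * Nd x + Real.exp (-B * t) * ((1 / 4) * Ndd (x / 2)))
          + 2 * B * (ϱ * N x + Real.exp (-B * t) * ((1 / 2) * Nd (x / 2)))
        = 4 * B * (ϱ * N (2 * x) + Real.exp (-B * t) * ((1 / 2) * Nd ((2 * x) / 2)))) ∧
    -- the L¹-distance to equilibrium decays exactly like `e^{-Bt}`
    (∀ t : ℝ, (∫ x in Set.Ioi (0:ℝ),
        |(ϱ * N x + Real.exp (-B * t) * ((1 / 2) * Nd (x / 2))) - ϱ * N x|)
      = Real.exp (-B * t) * ∫ x in Set.Ioi (0:ℝ), |(1 / 2) * Nd (x / 2)|) := by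

  -- differentiated equation: for y > 0, Ndd y + 2*B*Nd y = 8*B*Nd (2*y)
  have hdiff : ∀ y > (0:ℝ), Ndd y + 2 * B * Nd y = 8 * B * Nd (2 * y) := by
    intro y hy
    have hf : HasDerivAt (fun z => Nd z + 2 * B * N z - 4 * B * N (2 * z))
        (Ndd y + 2 * B * Nd y - 4 * B * (Nd (2 * y) * 2)) y := by
      have h1 : HasDerivAt (fun z => N (2 * z)) (Nd (2 * y) * 2) y := by
        have := (hNd (2 * y)).comp y ((hasDerivAt_id y).const_mul 2)
        simp at this; exact this
      exact ((hNdd y).add ((hNd y).const_mul (2 * B))).sub (h1.const_mul (4 * B))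
    have hzero : HasDerivAt (fun z => Nd z + 2 * B * N z - 4 * B * N (2 * z)) 0 y := by
      have heq : (fun z => Nd z + 2 * B * N z - 4 * B * N (2 * z)) =ᶠ[nhds y]
          (fun _ => (0:ℝ)) := by
        filter_upwards [eventually_gt_nhds hy] with z hz
        have := hNeq z hz
        linarith
      exact (hasDerivAt_const y 0).congr_of_eventuallyEq heq
    have := hf.unique hzero
    linarith
  refine ⟨?_, ?_, ?_, ?_⟩
  · intro x; simp
  · intro t; simp [hN0]
  · intro x hx t
    have hE : HasDerivAt (fun s : ℝ => Real.exp (-B * s)) (Real.exp (-B * t) * (-B)) t := by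
      have := ((hasDerivAt_id t).const_mul (-B)).exp
      simpa using this
    constructor
    · have := (hE.mul_const ((1 / 2) * Nd (x / 2))).const_add (ϱ * N x)
      convert this using 1
      any_goals rfl
      ring
    constructor
    · have h1 : HasDerivAt (fun z => Nd (z / 2)) (Ndd (x / 2) * (1 / 2)) x :=
        (hNdd (x / 2)).comp x ((hasDerivAt_id x).div_const 2)
      have h3 : HasDerivAt (fun z => ϱ * N z) (ϱ * Nd x) x := (hNd x).const_mul ϱ
      have := h3.add ((h1.const_mul (1 / 2 : ℝ)).const_mul (Real.exp (-B * t)))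
      convert this using 1
      any_goals rfl
      ring
    · have h1 := hNeq x hx
      have h2 := hdiff (x / 2) (by linarith)
      have h3 : 2 * (x / 2) = x := by ring
      rw [h3] at h2
      have h4 : (2 * x) / 2 = x := by ring
      rw [h4]
      nlinarith [Real.exp_pos (-B * t), h1, h2]
  · intro t
    have h1 : ∀ x : ℝ, |(ϱ * N x + Real.exp (-B * t) * ((1 / 2) * Nd (x / 2))) - ϱ * N x|
        = Real.exp (-B * t) * |(1 / 2) * Nd (x / 2)| := by
      intro x
      rw [add_sub_cancel_left, abs_mul, abs_of_pos (Real.exp_pos _)]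
    simp_rw [h1]
    rw [integral_const_mul]
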